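/- Let k ≥ 2 and let H be a hypergraph with minimum degree δ(H) ≥ 2^(k−2) + 1. Then H contains a Berge path with k base vertices (i.e., of length k−1). -/

import Mathlib

/-- The degree of a vertex `v` in a hypergraph `H`: the number of hyperedges containing `v`. -/
def hDegree {V : Type*} [DecidableEq V] (H : Finset (Finset V)) (v : V) : ℕ :=
  (H.filter (fun e => v ∈ e)).card

/-- `H` has a Berge cycle of length `ℓ`: there are `ℓ` distinct vertices `v i` and `ℓ`
distinct hyperedges `e i` with `v i, v (i+1) ∈ e i` (cyclically). -/
def HasBergeCycle {V : Type*} (H : Finset (Finset V)) (ℓ : ℕ) : Prop :=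
  ∃ (v : Fin ℓ → V) (e : Fin ℓ → Finset V),
    Function.Injective v ∧ Function.Injective e ∧ (∀ i, e i ∈ H) ∧
    ∀ i : Fin ℓ, v i ∈ e i ∧ v ⟨(i.1 + 1) % ℓ, Nat.mod_lt _ i.pos⟩ ∈ e i

/-- `H` has a Berge Hamiltonian cycle: a Berge cycle whose representative vertices
are all the vertices. -/
def HasBergeHamCycle {V : Type*} [Fintype V] (H : Finset (Finset V)) : Prop :=
  ∃ (v : Fin (Fintype.card V) → V) (e : Fin (Fintype.card V) → Finset V),
    Function.Bijective v ∧ Function.Injective e ∧ (∀ i, e i ∈ H) ∧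
    ∀ i : Fin (Fintype.card V),
      v i ∈ e i ∧ v ⟨(i.1 + 1) % Fintype.card V, Nat.mod_lt _ i.pos⟩ ∈ e i

namespace BergeAux

set_option linter.unusedSectionVars false

variable {V : Type*} [DecidableEq V]

/-- Berge path as lists: distinct vertices `vs`, distinct edges `es` of `H`,
with `es[i]` containing `vs[i]` and `vs[i+1]`. -/
def BPathD (d : V) (H : Finset (Finset V)) (vs : List V) (es : List (Finset V)) : Prop :=
  vs.Nodup ∧ es.Nodup ∧ (∀ e ∈ es, e ∈ H) ∧ vs.length = es.length + 1 ∧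
  ∀ i < es.length, vs.getD i d ∈ es.getD i ∅ ∧ vs.getD (i+1) d ∈ es.getD i ∅

lemma gci {α : Type*} (l : List α) {i j : ℕ} (hij : i = j) (hi : i < l.length) :
    l[i] = l[j]'(hij ▸ hi) := by subst hij; rfl

lemma bpath_singleton (d x : V) (H : Finset (Finset V)) : BPathD d H [x] [] := by
  refine ⟨List.nodup_singleton x, List.nodup_nil, by simp, by simp, ?_⟩
  intro i hi; simp at hi

lemma bpath_drop {d : V} {H : Finset (Finset V)} {vs : List V} {es : List (Finset V)}
    (t : ℕ) (h : BPathD d H vs es) (ht : t ≤ es.length) :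
    BPathD d H (vs.drop t) (es.drop t) := by
  obtain ⟨hv, he, hH, hlen, hadj⟩ := h
  refine ⟨(vs.drop_sublist t).nodup hv, (es.drop_sublist t).nodup he,
    fun e he' => hH e ((es.drop_sublist t).mem he'), by simp [List.length_drop]; omega, ?_⟩
  intro i hi
  simp only [List.length_drop] at hi
  have h1 : i < (vs.drop t).length := by simp [List.length_drop]; omega
  have h2 : i + 1 < (vs.drop t).length := by simp [List.length_drop]; omega
  have h3 : i < (es.drop t).length := by simp [List.length_drop]; omega
  rw [List.getD_eq_getElem _ _ h1, List.getD_eq_getElem _ _ h2, List.getD_eq_getElem _ _ h3,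
    List.getElem_drop, List.getElem_drop, List.getElem_drop]
  have := hadj (t + i) (by omega)
  rw [List.getD_eq_getElem _ _ (by omega : t + i < vs.length),
    List.getD_eq_getElem _ _ (by omega : t + i + 1 < vs.length),
    List.getD_eq_getElem _ _ (by omega : t + i < es.length)] at this
  exact this

lemma bpath_take {d : V} {H : Finset (Finset V)} {vs : List V} {es : List (Finset V)}
    (t : ℕ) (h : BPathD d H vs es) (ht : t ≤ es.length) :
    BPathD d H (vs.take (t+1)) (es.take t) := by
  obtain ⟨hv, he, hH, hlen, hadj⟩ := h
  refine ⟨(vs.take_sublist _).nodup hv, (es.take_sublist _).nodup he,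
    fun e he' => hH e ((es.take_sublist t).mem he'), by simp [List.length_take]; omega, ?_⟩
  intro i hi
  simp only [List.length_take] at hi
  have hit : i < t := by omega
  have h1 : i < (vs.take (t+1)).length := by simp [List.length_take]; omega
  have h2 : i + 1 < (vs.take (t+1)).length := by simp [List.length_take]; omega
  have h3 : i < (es.take t).length := by simp [List.length_take]; omega
  rw [List.getD_eq_getElem _ _ h1, List.getD_eq_getElem _ _ h2, List.getD_eq_getElem _ _ h3,
    List.getElem_take, List.getElem_take, List.getElem_take]
  have := hadj i (by omega)
  rw [List.getD_eq_getElem _ _ (by omega : i < vs.length),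
    List.getD_eq_getElem _ _ (by omega : i + 1 < vs.length),
    List.getD_eq_getElem _ _ (by omega : i < es.length)] at this
  exact this

lemma bpath_reverse {d : V} {H : Finset (Finset V)} {vs : List V} {es : List (Finset V)}
    (h : BPathD d H vs es) : BPathD d H vs.reverse es.reverse := by
  obtain ⟨hv, he, hH, hlen, hadj⟩ := h
  refine ⟨List.nodup_reverse.2 hv, List.nodup_reverse.2 he,
    fun e he' => hH e (List.mem_reverse.1 he'), by simp [hlen], ?_⟩
  intro i hi
  rw [List.length_reverse] at hi
  set n := es.length with hn
  have h1 : i < vs.reverse.length := by simp [hlen]; omega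
  have h2 : i + 1 < vs.reverse.length := by simp [hlen]; omega
  have h3 : i < es.reverse.length := by simp; omega
  rw [List.getD_eq_getElem _ _ h1, List.getD_eq_getElem _ _ h2, List.getD_eq_getElem _ _ h3,
    List.getElem_reverse, List.getElem_reverse, List.getElem_reverse]
  have := hadj (n - 1 - i) (by omega)
  rw [List.getD_eq_getElem _ _ (by omega : n - 1 - i < vs.length),
    List.getD_eq_getElem _ _ (by omega : n - 1 - i + 1 < vs.length),
    List.getD_eq_getElem _ _ (by omega : n - 1 - i < es.length)] at this
  rw [gci vs (show vs.length - 1 - i = n - 1 - i + 1 by omega) (by omega),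
    gci vs (show vs.length - 1 - (i + 1) = n - 1 - i by omega) (by omega),
    gci es (show es.length - 1 - i = n - 1 - i by omega) (by omega)]
  exact ⟨this.2, this.1⟩

lemma bpath_append {d : V} {H : Finset (Finset V)} {vs₁ vs₂ : List V}
    {es₁ es₂ : List (Finset V)} {g : Finset V}
    (h₁ : BPathD d H vs₁ es₁) (h₂ : BPathD d H vs₂ es₂)
    (hn₁ : vs₁ ≠ []) (hn₂ : vs₂ ≠ [])
    (hg : g ∈ H) (hgl : vs₁.getLast hn₁ ∈ g) (hgh : vs₂.head hn₂ ∈ g)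
    (hvn : (vs₁ ++ vs₂).Nodup) (hen : (es₁ ++ g :: es₂).Nodup) :
    BPathD d H (vs₁ ++ vs₂) (es₁ ++ g :: es₂) := by
  obtain ⟨hv1, he1, hH1, hlen1, hadj1⟩ := h₁
  obtain ⟨hv2, he2, hH2, hlen2, hadj2⟩ := h₂
  refine ⟨hvn, hen, ?_, by simp; omega, ?_⟩
  · intro e he
    rcases List.mem_append.1 he with h | h
    · exact hH1 e h
    · rcases List.mem_cons.1 h with h | h
      · exact h ▸ hg
      · exact hH2 e h
  intro i hi
  simp only [List.length_append, List.length_cons] at hi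
  have hvlen : (vs₁ ++ vs₂).length = vs₁.length + vs₂.length := by simp
  rcases lt_trichotomy i es₁.length with hlt | heq | hgt
  · -- inside first part
    have h1 : i < (vs₁ ++ vs₂).length := by simp; omega
    have h2 : i + 1 < (vs₁ ++ vs₂).length := by simp; omega
    have h3 : i < (es₁ ++ g :: es₂).length := by simp; omega
    rw [List.getD_eq_getElem _ _ h1, List.getD_eq_getElem _ _ h2, List.getD_eq_getElem _ _ h3,
      List.getElem_append_left (by omega : i < vs₁.length),
      List.getElem_append_left (by omega : i + 1 < vs₁.length),
      List.getElem_append_left (by omega : i < es₁.length)]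
    have := hadj1 i hlt
    rw [List.getD_eq_getElem _ _ (by omega : i < vs₁.length),
      List.getD_eq_getElem _ _ (by omega : i + 1 < vs₁.length),
      List.getD_eq_getElem _ _ (by omega : i < es₁.length)] at this
    exact this
  · -- the connecting edge g
    subst heq
    have h1 : es₁.length < (vs₁ ++ vs₂).length := by simp; omega
    have h2 : es₁.length + 1 < (vs₁ ++ vs₂).length := by
      have := List.length_pos_iff.2 hn₂
      simp only [List.length_append]
      omega
    have h3 : es₁.length < (es₁ ++ g :: es₂).length := by
      simp only [List.length_append, List.length_cons]; omega
    rw [List.getD_eq_getElem _ _ h1, List.getD_eq_getElem _ _ h2, List.getD_eq_getElem _ _ h3]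
    have ev : (vs₁ ++ vs₂)[es₁.length]'h1 = vs₁.getLast hn₁ := by
      rw [List.getElem_append_left (by omega : es₁.length < vs₁.length),
        List.getLast_eq_getElem]
      exact gci _ (by omega) _
    have ev2 : (vs₁ ++ vs₂)[es₁.length + 1]'h2 = vs₂.head hn₂ := by
      rw [List.getElem_append_right (by omega : vs₁.length ≤ es₁.length + 1),
        List.head_eq_getElem]
      exact gci _ (by omega) _
    have ee : (es₁ ++ g :: es₂)[es₁.length]'h3 = g := by
      rw [List.getElem_append_right (by omega : es₁.length ≤ es₁.length)]
      simp
    rw [ev, ev2, ee]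
    exact ⟨hgl, hgh⟩
  · -- inside second part
    obtain ⟨s, rfl⟩ : ∃ s, i = es₁.length + 1 + s := ⟨i - es₁.length - 1, by omega⟩
    have hs : s < es₂.length := by omega
    have h1 : es₁.length + 1 + s < (vs₁ ++ vs₂).length := by simp; omega
    have h2 : es₁.length + 1 + s + 1 < (vs₁ ++ vs₂).length := by simp; omega
    have h3 : es₁.length + 1 + s < (es₁ ++ g :: es₂).length := by simp; omega
    rw [List.getD_eq_getElem _ _ h1, List.getD_eq_getElem _ _ h2, List.getD_eq_getElem _ _ h3,
      List.getElem_append_right (by omega : vs₁.length ≤ es₁.length + 1 + s),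
      List.getElem_append_right (by omega : vs₁.length ≤ es₁.length + 1 + s + 1),
      List.getElem_append_right (by omega : es₁.length ≤ es₁.length + 1 + s)]
    have := hadj2 s hs
    rw [List.getD_eq_getElem _ _ (by omega : s < vs₂.length),
      List.getD_eq_getElem _ _ (by omega : s + 1 < vs₂.length),
      List.getD_eq_getElem _ _ (by omega : s < es₂.length)] at this
    rw [gci vs₂ (show es₁.length + 1 + s - vs₁.length = s by omega) (by omega),
      gci vs₂ (show es₁.length + 1 + s + 1 - vs₁.length = s + 1 by omega) (by omega),
      gci (g :: es₂) (show es₁.length + 1 + s - es₁.length = s + 1 by omega) (by simp; omega)]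
    have ee : (g :: es₂)[s+1]'(by simp; omega) = es₂[s]'hs := by simp
    rw [ee]
    exact this

lemma count_subsets (H : Finset (Finset V)) {S : Finset V} (u : V) :
    (H.filter (fun f => u ∈ f ∧ f ⊆ S)).card ≤ 2 ^ (S.erase u).card := by
  calc (H.filter (fun f => u ∈ f ∧ f ⊆ S)).card
      ≤ (S.erase u).powerset.card := by
        apply Finset.card_le_card_of_injOn (fun f => f.erase u)
        · intro f hf
          simp only [Finset.mem_coe, Finset.mem_filter] at hf
          exact Finset.mem_powerset.2 (Finset.erase_subset_erase _ hf.2.2)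
        · intro f hf f' hf' h
          simp only [Finset.coe_filter, Set.mem_setOf_eq] at hf hf'
          rw [← Finset.insert_erase hf.2.1, ← Finset.insert_erase hf'.2.1]
          simp only at h
          rw [h]
    _ = 2 ^ (S.erase u).card := Finset.card_powerset _

lemma count_subsets2 (H : Finset (Finset V)) {S : Finset V} (u w : V) :
    (H.filter (fun f => u ∈ f ∧ f ⊆ S ∧ w ∉ f)).card ≤ 2 ^ ((S.erase w).erase u).card := by
  calc (H.filter (fun f => u ∈ f ∧ f ⊆ S ∧ w ∉ f)).card
      ≤ ((S.erase w).erase u).powerset.card := by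
        apply Finset.card_le_card_of_injOn (fun f => f.erase u)
        · intro f hf
          simp only [Finset.mem_coe, Finset.mem_filter] at hf
          refine Finset.mem_powerset.2 (Finset.erase_subset_erase _ ?_)
          exact Finset.subset_erase.2 ⟨hf.2.2.1, hf.2.2.2⟩
        · intro f hf f' hf' h
          simp only [Finset.coe_filter, Set.mem_setOf_eq] at hf hf'
          rw [← Finset.insert_erase hf.2.1, ← Finset.insert_erase hf'.2.1]
          simp only at h
          rw [h]
    _ = 2 ^ ((S.erase w).erase u).card := Finset.card_powerset _

lemma stuck_bound (H : Finset (Finset V)) (S : Finset V) (Efin : Finset (Finset V)) (u : V)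
    (hstuck : ∀ f ∈ H, u ∈ f → f ∈ Efin ∨ f ⊆ S) :
    (H.filter (fun f => u ∈ f)).card ≤ 2 ^ (S.erase u).card + Efin.card := by
  have hsub : H.filter (fun f => u ∈ f) ⊆ H.filter (fun f => u ∈ f ∧ f ⊆ S) ∪ Efin := by
    intro f hf
    simp only [Finset.mem_filter] at hf
    rcases hstuck f hf.1 hf.2 with h | h
    · exact Finset.mem_union_right _ h
    · exact Finset.mem_union_left _ (Finset.mem_filter.2 ⟨hf.1, hf.2, h⟩)
  calc (H.filter (fun f => u ∈ f)).card
      ≤ (H.filter (fun f => u ∈ f ∧ f ⊆ S) ∪ Efin).card := Finset.card_le_card hsub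
    _ ≤ (H.filter (fun f => u ∈ f ∧ f ⊆ S)).card + Efin.card := Finset.card_union_le _ _
    _ ≤ 2 ^ (S.erase u).card + Efin.card := by
        exact Nat.add_le_add_right (count_subsets H u) _

lemma bpath_extend {d : V} {H : Finset (Finset V)} {vs : List V} {es : List (Finset V)}
    (h : BPathD d H vs es) (hne : vs ≠ [])
    {f : Finset V} {x : V} (hf : f ∈ H) (hfe : f ∉ es.toFinset) (huf : vs.getLast hne ∈ f)
    (hxf : x ∈ f) (hxs : x ∉ vs.toFinset) :
    BPathD d H (vs ++ [x]) (es ++ [f]) := by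
  have hfL : f ∉ es := fun hmem => hfe (List.mem_toFinset.2 hmem)
  have hxL : x ∉ vs := fun hmem => hxs (List.mem_toFinset.2 hmem)
  exact bpath_append h (bpath_singleton d x H) hne (by simp) hf huf (by simpa using hxf)
    (((List.perm_append_singleton x vs).symm).nodup (List.nodup_cons.2 ⟨hxL, h.1⟩))
    (((List.perm_append_singleton f es).symm).nodup (List.nodup_cons.2 ⟨hfL, h.2.1⟩))

lemma grow (d : V) (H : Finset (Finset V)) (k : ℕ) (hk : 2 ≤ k)
    (hδ : ∀ v : V, 2 ^ (k - 2) + 1 ≤ (H.filter (fun e => v ∈ e)).card) :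
    ∀ j, 1 ≤ j → j ≤ k - 1 → ∃ vs es, BPathD d H vs es ∧ vs.length = j := by
  intro j
  induction j with
  | zero => intro h; omega
  | succ n ih =>
    intro _ hle
    rcases Nat.eq_zero_or_pos n with rfl | hn
    · exact ⟨[d], [], bpath_singleton d d H, rfl⟩
    obtain ⟨vs, es, hp, hlen⟩ := ih hn (by omega)
    have hk3 : 3 ≤ k := by omega
    have hne : vs ≠ [] := by
      intro h; rw [h] at hlen; simp at hlen; omega
    have hkey : ∃ f ∈ H, f ∉ es.toFinset ∧ vs.getLast hne ∈ f ∧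
        ∃ x ∈ f, x ∉ vs.toFinset := by
      by_contra hcon
      push_neg at hcon
      have hstuck : ∀ f ∈ H, vs.getLast hne ∈ f → f ∈ es.toFinset ∨ f ⊆ vs.toFinset := by
        intro f hf huf
        by_cases hfe : f ∈ es.toFinset
        · exact Or.inl hfe
        · exact Or.inr (fun x hx => hcon f hf hfe huf x hx)
      have hb := stuck_bound H vs.toFinset es.toFinset (vs.getLast hne) hstuck
      have hSu : vs.getLast hne ∈ vs.toFinset := List.mem_toFinset.2 (List.getLast_mem hne)
      have hScard : vs.toFinset.card = n := by
        rw [List.toFinset_card_of_nodup hp.1]; exact hlen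
      have hEcard : es.toFinset.card = n - 1 := by
        rw [List.toFinset_card_of_nodup hp.2.1]
        have := hp.2.2.2.1; omega
      rw [Finset.card_erase_of_mem hSu, hScard, hEcard] at hb
      have hdeg := hδ (vs.getLast hne)
      have h1 : 2 ^ (n - 1) ≤ 2 ^ (k - 3) := Nat.pow_le_pow_right (by norm_num) (by omega)
      have h3 : k - 3 < 2 ^ (k - 3) := Nat.lt_two_pow_self
      have hm : n - 1 < 2 ^ (k - 3) := lt_of_le_of_lt (by omega) h3
      have h4 : 2 ^ (k - 3) + 2 ^ (k - 3) ≤ 2 ^ (k - 2) := by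
        have hkk : k - 2 = (k - 3) + 1 := by omega
        rw [hkk, pow_succ, mul_two]
      linarith
    obtain ⟨f, hf, hfe, huf, x, hxf, hxs⟩ := hkey
    exact ⟨vs ++ [x], es ++ [f], bpath_extend hp hne hf hfe huf hxf hxs, by simp [hlen]⟩

lemma final_step (d : V) (H : Finset (Finset V)) (k : ℕ) (hk : 2 ≤ k)
    (hδ : ∀ v : V, 2 ^ (k - 2) + 1 ≤ (H.filter (fun e => v ∈ e)).card)
    (vs : List V) (es : List (Finset V)) (hp : BPathD d H vs es)
    (hlen : vs.length = k - 1) :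
    ∃ vs' es', BPathD d H vs' es' ∧ vs'.length = k := by
  have hne : vs ≠ [] := by
    intro h; rw [h] at hlen; simp at hlen; omega
  have hesl : es.length = k - 2 := by have := hp.2.2.2.1; omega
  by_cases hex : ∃ f ∈ H, f ∉ es.toFinset ∧ vs.getLast hne ∈ f ∧ ∃ x ∈ f, x ∉ vs.toFinset
  · obtain ⟨f, hf, hfe, huf, x, hxf, hxs⟩ := hex
    exact ⟨vs ++ [x], es ++ [f], bpath_extend hp hne hf hfe huf hxf hxs,
      by simp [hlen]; omega⟩
  push_neg at hex
  have hstuck : ∀ f ∈ H, vs.getLast hne ∈ f → f ∈ es.toFinset ∨ f ⊆ vs.toFinset := by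
    intro f hf huf
    by_cases hfe : f ∈ es.toFinset
    · exact Or.inl hfe
    · exact Or.inr (fun x hx => hex f hf hfe huf x hx)
  have hSu : vs.getLast hne ∈ vs.toFinset := List.mem_toFinset.2 (List.getLast_mem hne)
  have hScard : vs.toFinset.card = k - 1 := by
    rw [List.toFinset_card_of_nodup hp.1]; exact hlen
  have hEcard : es.toFinset.card = k - 2 := by
    rw [List.toFinset_card_of_nodup hp.2.1]; exact hesl
  have hdeg := hδ (vs.getLast hne)
  -- Step A: some used edge contains the endpoint and leaves the base set
  have hA : ∃ e ∈ es.toFinset, vs.getLast hne ∈ e ∧ ¬ e ⊆ vs.toFinset := by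
    by_contra hcon
    push_neg at hcon
    have hsub : H.filter (fun f => vs.getLast hne ∈ f) ⊆
        H.filter (fun f => vs.getLast hne ∈ f ∧ f ⊆ vs.toFinset) := by
      intro f hf
      simp only [Finset.mem_filter] at hf ⊢
      refine ⟨hf.1, hf.2, ?_⟩
      rcases hstuck f hf.1 hf.2 with h | h
      · exact hcon f h hf.2
      · exact h
    have hle := (Finset.card_le_card hsub).trans (count_subsets H (vs.getLast hne))
    rw [Finset.card_erase_of_mem hSu, hScard] at hle
    rw [show k - 1 - 1 = k - 2 from by omega] at hle
    linarith
  obtain ⟨e, heE, hue, heS⟩ := hA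
  have heL : e ∈ es := List.mem_toFinset.1 heE
  obtain ⟨x, hxe, hxS⟩ : ∃ x ∈ e, x ∉ vs.toFinset := by
    by_contra hcon
    push_neg at hcon
    exact heS hcon
  obtain ⟨i, hilen, hie⟩ := List.mem_iff_getElem.1 heL
  have hk3 : 3 ≤ k := by omega
  have hivs : i < vs.length := by omega
  have hi1vs : i + 1 < vs.length := by omega
  have hwS : vs[i] ∈ vs.toFinset := List.mem_toFinset.2 (List.getElem_mem _)
  have hwu : vs[i] ≠ vs.getLast hne := by
    rw [List.getLast_eq_getElem]
    intro hcontra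
    have := hp.1.getElem_inj_iff.1 hcontra
    omega
  -- Step B: a fresh edge inside the base set joining vs[i] and the endpoint
  have hB : ∃ g ∈ H, g ∉ es.toFinset ∧ vs.getLast hne ∈ g ∧ vs[i] ∈ g ∧ g ⊆ vs.toFinset := by
    by_contra hcon
    push_neg at hcon
    have hsub : H.filter (fun f => vs.getLast hne ∈ f) ⊆
        es.toFinset ∪ H.filter (fun f => vs.getLast hne ∈ f ∧ f ⊆ vs.toFinset ∧ vs[i] ∉ f) := by
      intro f hf
      simp only [Finset.mem_filter] at hf
      rcases hstuck f hf.1 hf.2 with h | h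
      · exact Finset.mem_union_left _ h
      · by_cases hfE : f ∈ es.toFinset
        · exact Finset.mem_union_left _ hfE
        · by_cases hwf : vs[i] ∈ f
          · exact absurd h (hcon f hf.1 hfE hf.2 hwf)
          · exact Finset.mem_union_right _ (Finset.mem_filter.2 ⟨hf.1, hf.2, h, hwf⟩)
    have hcard := (Finset.card_le_card hsub).trans (Finset.card_union_le _ _)
    have hc2 := count_subsets2 H (vs.getLast hne) (vs[i]'hivs) (S := vs.toFinset)
    have hc3 : ((vs.toFinset.erase (vs[i]'hivs)).erase (vs.getLast hne)).card = k - 3 := by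
      rw [Finset.card_erase_of_mem (Finset.mem_erase.2 ⟨fun h => hwu h.symm, hSu⟩),
        Finset.card_erase_of_mem hwS, hScard]
      omega
    rw [hc3] at hc2
    rw [hEcard] at hcard
    have h3 : k - 3 < 2 ^ (k - 3) := Nat.lt_two_pow_self
    have h4 : 2 ^ (k - 3) + 2 ^ (k - 3) ≤ 2 ^ (k - 2) := by
      have hkk : k - 2 = (k - 3) + 1 := by omega
      rw [hkk, pow_succ, mul_two]
    have h5 : k - 2 ≤ 2 ^ (k - 3) := by omega
    linarith
  obtain ⟨g, hgH, hgE, hug, hwg, hgS⟩ := hB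
  have hgL : g ∉ es := fun hmem => hgE (List.mem_toFinset.2 hmem)
  -- abbreviations
  have hi1le : i + 1 ≤ es.length := by omega
  have hpa : BPathD d H (vs.take (i+1)) (es.take i) := bpath_take i hp (by omega)
  have hpb : BPathD d H (vs.drop (i+1)).reverse (es.drop (i+1)).reverse :=
    bpath_reverse (bpath_drop (i+1) hp hi1le)
  have hPane : vs.take (i+1) ≠ [] := by
    apply List.ne_nil_of_length_pos
    simp only [List.length_take]
    omega
  have hPbne : vs.drop (i+1) ≠ [] := by
    apply List.ne_nil_of_length_pos
    simp only [List.length_drop]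
    omega
  have hPbrne : (vs.drop (i+1)).reverse ≠ [] := by
    simpa using hPbne
  have hPalen : (vs.take (i+1)).length = i + 1 := by
    simp only [List.length_take]; omega
  -- endpoints of the pieces
  have hlastPa : (vs.take (i+1)).getLast hPane = vs[i]'hivs := by
    rw [List.getLast_eq_getElem, List.getElem_take]
    exact gci vs (by simp only [List.length_take]; omega) _
  have hheadPbr : (vs.drop (i+1)).reverse.head hPbrne = vs.getLast hne := by
    rw [List.head_reverse, List.getLast_eq_getElem hne, List.getLast_eq_getElem,
      List.getElem_drop]
    exact gci vs (by simp only [List.length_drop]; omega) _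
  -- Nodup for the first append
  have heq0 : vs.take (i+1) ++ vs.drop (i+1) = vs := List.take_append_drop _ _
  have hperm1 : (vs.take (i+1) ++ (vs.drop (i+1)).reverse).Perm vs := by
    have h := List.Perm.append_left (vs.take (i+1)) (List.reverse_perm (vs.drop (i+1)))
    rwa [heq0] at h
  have hvn1 : (vs.take (i+1) ++ (vs.drop (i+1)).reverse).Nodup := hperm1.symm.nodup hp.1
  have hEaEb : ((es.take i) ++ (es.drop (i+1))).Sublist es := by
    have h1 : (es.drop (i+1)).Sublist (es.drop i) := by
      rw [List.drop_eq_getElem_cons hilen]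
      exact List.sublist_cons_self _ _
    have h2 := (List.Sublist.refl (es.take i)).append h1
    rwa [List.take_append_drop] at h2
  have hnodupEaEb : ((es.take i) ++ (es.drop (i+1))).Nodup := hEaEb.nodup hp.2.1
  have hnodupEaEbr : ((es.take i) ++ (es.drop (i+1)).reverse).Nodup := by
    have hperm := List.Perm.append_left (es.take i) (List.reverse_perm (es.drop (i+1)))
    exact hperm.symm.nodup hnodupEaEb
  have heEa : e ∉ es.take i := by
    intro hmem
    obtain ⟨t, ht, hte⟩ := List.mem_iff_getElem.1 hmem
    have ht' : t < i := by
      have := ht; simp only [List.length_take] at this; omega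
    rw [List.getElem_take] at hte
    have : t = i := hp.2.1.getElem_inj_iff.1 (hte.trans hie.symm)
    omega
  have heEbr : e ∉ (es.drop (i+1)).reverse := by
    intro hmem
    rw [List.mem_reverse] at hmem
    obtain ⟨s, hs, hse⟩ := List.mem_iff_getElem.1 hmem
    rw [List.getElem_drop] at hse
    have : i + 1 + s = i := hp.2.1.getElem_inj_iff.1 (hse.trans hie.symm)
    omega
  have hgnotin : g ∉ (es.take i) ++ (es.drop (i+1)).reverse := by
    intro hmem
    apply hgL
    rcases List.mem_append.1 hmem with h | h
    · exact (es.take_sublist i).mem h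
    · exact (es.drop_sublist (i+1)).mem (List.mem_reverse.1 h)
  have hen1 : ((es.take i) ++ g :: (es.drop (i+1)).reverse).Nodup := by
    have h := List.nodup_cons.2 ⟨hgnotin, hnodupEaEbr⟩
    exact (List.perm_middle.symm).nodup h
  -- first append
  have happ1 : BPathD d H (vs.take (i+1) ++ (vs.drop (i+1)).reverse)
      ((es.take i) ++ g :: (es.drop (i+1)).reverse) :=
    bpath_append hpa hpb hPane hPbrne hgH (hlastPa ▸ hwg) (hheadPbr ▸ hug) hvn1 hen1
  -- second append
  have hQne : vs.take (i+1) ++ (vs.drop (i+1)).reverse ≠ [] := by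
    apply List.ne_nil_of_length_pos
    rw [hperm1.length_eq]
    omega
  have hQlen : (vs.take (i+1) ++ (vs.drop (i+1)).reverse).length = vs.length :=
    hperm1.length_eq
  have hlastQ : (vs.take (i+1) ++ (vs.drop (i+1)).reverse).getLast hQne = vs[i+1]'hi1vs := by
    rw [List.getLast_eq_getElem,
      List.getElem_append_right (by rw [hQlen, hPalen]; omega : (vs.take (i+1)).length ≤
        (vs.take (i+1) ++ (vs.drop (i+1)).reverse).length - 1),
      List.getElem_reverse, List.getElem_drop]
    exact gci vs (by
      simp only [List.length_drop, List.length_append, List.length_reverse, List.length_take]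
      omega) _
  have hadj0 := hp.2.2.2.2 i hilen
  rw [List.getD_eq_getElem _ _ hivs, List.getD_eq_getElem _ _ hi1vs,
    List.getD_eq_getElem _ _ hilen, hie] at hadj0
  have hv1e : vs[i+1]'hi1vs ∈ e := hadj0.2
  have hxQ : x ∉ vs.take (i+1) ++ (vs.drop (i+1)).reverse := fun hmem =>
    hxS (List.mem_toFinset.2 (hperm1.subset hmem))
  have hvn2 : ((vs.take (i+1) ++ (vs.drop (i+1)).reverse) ++ [x]).Nodup :=
    ((List.perm_append_singleton x _).symm).nodup (List.nodup_cons.2 ⟨hxQ, hvn1⟩)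
  have heF : e ∉ (es.take i) ++ g :: (es.drop (i+1)).reverse := by
    intro hmem
    rcases List.mem_append.1 hmem with h | h
    · exact heEa h
    · rcases List.mem_cons.1 h with h | h
      · exact hgL (h ▸ heL)
      · exact heEbr h
  have hen2 : (((es.take i) ++ g :: (es.drop (i+1)).reverse) ++ [e]).Nodup :=
    ((List.perm_append_singleton e _).symm).nodup (List.nodup_cons.2 ⟨heF, hen1⟩)
  have happ2 := bpath_append happ1 (bpath_singleton d x H) hQne (by simp)
    (hp.2.2.1 e heL) (hlastQ ▸ hv1e) (by simpa using hxe) hvn2 hen2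
  refine ⟨_, _, happ2, ?_⟩
  simp only [List.length_append, List.length_cons, List.length_nil]
  rw [show (vs.take (i+1)).length + ((vs.drop (i+1)).reverse.length) =
    (vs.take (i+1) ++ (vs.drop (i+1)).reverse).length from (List.length_append).symm, hQlen]
  omega

end BergeAux

/-- Dirac-type condition for long Berge paths: if `k ≥ 2` and `H` is a simple hypergraph
with minimum degree at least `2^(k-2) + 1`, then `H` contains a Berge path with `k` base
vertices (i.e. of length `k - 1`). -/
theorem stmt_13 {V : Type*} [DecidableEq V] [Nonempty V] (k : ℕ) (hk : 2 ≤ k)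
    (H : Finset (Finset V))
    (hδ : ∀ v : V, 2 ^ (k - 2) + 1 ≤ hDegree H v) :
    ∃ (v : Fin k → V) (e : Fin (k - 1) → Finset V),
      Function.Injective v ∧ Function.Injective e ∧ (∀ i, e i ∈ H) ∧
      ∀ i : Fin (k - 1),
        v ⟨i.1, by have := i.2; omega⟩ ∈ e i ∧ v ⟨i.1 + 1, by have := i.2; omega⟩ ∈ e i := by
  
  classical
  obtain ⟨d⟩ := ‹Nonempty V›
  have hδ' : ∀ v : V, 2 ^ (k - 2) + 1 ≤ (H.filter (fun e => v ∈ e)).card := fun v => hδ v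
  obtain ⟨vs, es, hp, hlen⟩ := BergeAux.grow d H k hk hδ' (k-1) (by omega) le_rfl
  obtain ⟨vs', es', hp', hlen'⟩ := BergeAux.final_step d H k hk hδ' vs es hp hlen
  obtain ⟨hv, he, hH, hlene, hadj⟩ := hp'
  have hesl : es'.length = k - 1 := by omega
  refine ⟨fun i => vs'.getD i.1 d, fun i => es'.getD i.1 ∅, ?_, ?_, ?_, ?_⟩
  · intro a b hab
    simp only at hab
    rw [List.getD_eq_getElem _ _ (by have := a.isLt; omega : (a:ℕ) < vs'.length),
      List.getD_eq_getElem _ _ (by have := b.isLt; omega : (b:ℕ) < vs'.length)] at hab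
    exact Fin.ext (hv.getElem_inj_iff.1 hab)
  · intro a b hab
    simp only at hab
    rw [List.getD_eq_getElem _ _ (by have := a.isLt; omega : (a:ℕ) < es'.length),
      List.getD_eq_getElem _ _ (by have := b.isLt; omega : (b:ℕ) < es'.length)] at hab
    exact Fin.ext (he.getElem_inj_iff.1 hab)
  · intro i
    show es'.getD i.1 ∅ ∈ H
    rw [List.getD_eq_getElem _ _ (by have := i.isLt; omega : (i:ℕ) < es'.length)]
    exact hH _ (List.getElem_mem _)
  · intro i
    exact hadj i.1 (by have := i.isLt; omega)
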